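/- Let weights w_{j,α} (j = 1,…,n, α ∈ [0,1]) satisfy: Σⱼ w_{j,α} = 1 with w_{j,α} ≥ 0; and for α < β, Σ_{j=1}^k w_{j,α} ≤ Σ_{j=1}^k w_{j,β} for all k. Then the weighted-mean regions D_α = conv{Σⱼ w_{j,α} x^{π(j)} : π a permutation of {1,…,n}} are nested: α > β implies D_α ⊆ D_β. -/

import Mathlib

open Finset

lemma abel_range' (n : ℕ) (F B : ℕ → ℝ)
    (hB : ∀ k, k + 1 < n → B k ≤ B (k + 1))
    (hF : ∀ k < n, ∑ j ∈ range (k + 1), F j ≤ 0)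
    (hFn : ∑ j ∈ range n, F j = 0) :
    0 ≤ ∑ j ∈ range n, F j * B j := by
  have h := Finset.sum_range_by_parts B F n
  rcases Nat.eq_zero_or_pos n with rfl | hn
  · simp
  have hrw : ∑ j ∈ range n, F j * B j = ∑ j ∈ range n, B j • F j := by
    simp [mul_comm, smul_eq_mul]
  rw [hrw, h, hFn, smul_zero, zero_sub, le_neg, neg_zero]
  apply Finset.sum_nonpos
  intro i hi
  simp only [mem_range] at hi
  have h1 : 0 ≤ B (i + 1) - B i := by
    have := hB i (by omega)
    linarith
  have h2 : ∑ j ∈ range (i + 1), F j ≤ 0 := hF i (by omega)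
  exact mul_nonpos_of_nonneg_of_nonpos h1 h2

lemma filter_sum_eq' {n : ℕ} (g : Fin n → ℝ) (k : ℕ) (hk : k ≤ n) :
    ∑ j ∈ univ.filter (fun j : Fin n => (j : ℕ) < k), g j
      = ∑ j ∈ range k, (if h : j < n then g ⟨j, h⟩ else 0) := by
  refine Finset.sum_bij (fun j _ => (j : ℕ)) ?_ ?_ ?_ ?_
  · intro a ha; simp only [mem_filter] at ha; simpa using ha.2
  · intro a _ b _ h; exact Fin.val_injective h
  · intro b hb; simp only [mem_range] at hb
    exact ⟨⟨b, lt_of_lt_of_le hb hk⟩, by simpa using hb, rfl⟩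
  · intro a ha; simp [a.isLt]

lemma abel_fin' {n : ℕ} (u v b : Fin n → ℝ)
    (hpart : ∀ k : Fin n, ∑ j ∈ univ.filter (· ≤ k), u j ≤ ∑ j ∈ univ.filter (· ≤ k), v j)
    (hsum : ∑ j, u j = ∑ j, v j)
    (hb : Monotone b) :
    ∑ j, v j * b j ≤ ∑ j, u j * b j := by
  set F : ℕ → ℝ := fun j => if h : j < n then u ⟨j, h⟩ - v ⟨j, h⟩ else 0 with hFdef
  set B : ℕ → ℝ := fun j => if h : j < n then b ⟨j, h⟩ else 0 with hBdef
  have key : 0 ≤ ∑ j ∈ range n, F j * B j := by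
    apply abel_range'
    · intro k hk
      simp only [hBdef]
      rw [dif_pos (by omega : k < n), dif_pos hk]
      exact hb (by simp [Fin.le_def])
    · intro k hk
      have h1 : ∑ j ∈ range (k + 1), F j
          = ∑ j ∈ univ.filter (fun j : Fin n => (j : ℕ) < k + 1), (u j - v j) := by
        rw [filter_sum_eq' (fun j => u j - v j) (k + 1) (by omega)]
      have h2 : (univ.filter (fun j : Fin n => (j : ℕ) < k + 1))
          = univ.filter (· ≤ (⟨k, hk⟩ : Fin n)) := by
        apply Finset.filter_congr
        intro j _
        simp [Fin.le_def, Nat.lt_succ_iff]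
      rw [h1, h2, Finset.sum_sub_distrib, sub_nonpos]
      exact hpart ⟨k, hk⟩
    · have : ∑ j ∈ range n, F j = ∑ j : Fin n, (u j - v j) := by
        rw [Finset.sum_range fun j => F j]
        apply Finset.sum_congr rfl
        intro i _
        simp [hFdef, i.isLt]
      rw [this, Finset.sum_sub_distrib, hsum, sub_self]
  have heq : ∑ j ∈ range n, F j * B j = ∑ j : Fin n, (u j - v j) * b j := by
    rw [Finset.sum_range fun j => F j * B j]
    apply Finset.sum_congr rfl
    intro i _
    simp [hFdef, hBdef, i.isLt]
  have expand : ∑ j : Fin n, (u j - v j) * b j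
      = ∑ j : Fin n, u j * b j - ∑ j : Fin n, v j * b j := by
    rw [← Finset.sum_sub_distrib]
    exact Finset.sum_congr rfl fun i _ => by ring
  rw [heq, expand] at key
  linarith

/-- Weighted-mean regions built from weights satisfying (i) nonnegativity and
normalization, (ii) monotonicity in j, (iii) partial sums increasing in α, are
nested: α > β implies D_α ⊆ D_β. -/
theorem stmt18 {d n : ℕ} (x : Fin n → (Fin d → ℝ))
    (w : Fin n → ℝ → ℝ)
    (hw0 : ∀ α ∈ Set.Icc (0:ℝ) 1, ∀ j, 0 ≤ w j α)
    (hwsum : ∀ α ∈ Set.Icc (0:ℝ) 1, (∑ j, w j α) = 1)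
    (hwmono : ∀ α ∈ Set.Icc (0:ℝ) 1, ∀ j k : Fin n, j ≤ k → w j α ≤ w k α)
    (hpartial : ∀ α ∈ Set.Icc (0:ℝ) 1, ∀ β ∈ Set.Icc (0:ℝ) 1, α < β →
      ∀ k : Fin n, (∑ j ∈ Finset.univ.filter (· ≤ k), w j α)
        ≤ ∑ j ∈ Finset.univ.filter (· ≤ k), w j β)
    (Dz : ℝ → Set (Fin d → ℝ))
    (hDz : ∀ α, Dz α = convexHull ℝ
      {y | ∃ π : Equiv.Perm (Fin n), y = ∑ j, w j α • x (π j)}) :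
    ∀ α ∈ Set.Icc (0:ℝ) 1, ∀ β ∈ Set.Icc (0:ℝ) 1, β < α → Dz α ⊆ Dz β := by
  intro α hα β hβ hβα
  rw [hDz α, hDz β]
  refine convexHull_min ?_ (convex_convexHull ℝ _)
  rintro y ⟨π, rfl⟩
  set S : Set (Fin d → ℝ) := {y | ∃ σ : Equiv.Perm (Fin n), y = ∑ j, w j β • x (σ j)} with hS
  by_contra hy
  have hfin : S.Finite := by
    have : S = Set.range (fun σ : Equiv.Perm (Fin n) => ∑ j, w j β • x (σ j)) := by
      ext z; constructor
      · rintro ⟨σ, rfl⟩; exact ⟨σ, rfl⟩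
      · rintro ⟨σ, rfl⟩; exact ⟨σ, rfl⟩
    rw [this]; exact Set.finite_range _
  obtain ⟨f, t, hft, hty⟩ := geometric_hahn_banach_closed_point
    (convex_convexHull ℝ S) (hfin.isClosed_convexHull (𝕜 := ℝ)) hy
  set a : Fin n → ℝ := fun j => f (x (π j)) with ha
  set τ := Tuple.sort a with hτ
  have hmono : Monotone (a ∘ τ) := Tuple.monotone_sort a
  have hz : (∑ j, w j β • x (π (τ j))) ∈ S := ⟨τ.trans π, rfl⟩
  have hlt : f (∑ j, w j β • x (π (τ j))) < t := hft _ (subset_convexHull ℝ S hz)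
  have hfy : f (∑ j, w j α • x (π j)) = ∑ j, w j α * a j := by
    rw [map_sum]; simp [ha]
  have hfz : f (∑ j, w j β • x (π (τ j))) = ∑ j, w j β * (a ∘ τ) j := by
    rw [map_sum]; simp [ha]
  have hA : ∑ j, w j α * a j ≤ ∑ j, w j α * (a ∘ τ) j := by
    have hmv : Monovary (fun j => w j α) (a ∘ τ) :=
      Monotone.monovary (fun j k hjk => hwmono α hα j k hjk) hmono
    have := hmv.sum_smul_comp_perm_le_sum_smul (σ := τ⁻¹)
    simp only [smul_eq_mul] at this
    refine le_trans (le_of_eq ?_) this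
    apply Finset.sum_congr rfl
    intro j _
    simp
  have hB : ∑ j, w j α * (a ∘ τ) j ≤ ∑ j, w j β * (a ∘ τ) j := by
    apply abel_fin' (fun j => w j β) (fun j => w j α) (a ∘ τ)
      (hpartial β hβ α hα hβα)
      (by rw [hwsum β hβ, hwsum α hα]) hmono
  have : f (∑ j, w j α • x (π j)) ≤ f (∑ j, w j β • x (π (τ j))) := by
    rw [hfy, hfz]; exact hA.trans hB
  linarith
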